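/- Let G be a finite cyclic group with generator g and H = ⟨g²⟩, and let ρ, ρ' : G → ℂˣ be homomorphisms with |ρ(H)| = |ρ'(H)|. Set r = |ρ(G)|. Then exactly one of the following holds: |ρ'(G)| = r, or (|ρ'(G)| = 2r and r is odd), or (|ρ'(G)| = r/2 and r/2 is odd). -/
import Mathlib

lemma gcd_two_eq (n : ℕ) : Nat.gcd n 2 = if n % 2 = 0 then 2 else 1 := by
  rw [Nat.gcd_comm, Nat.gcd_rec]
  rcases Nat.mod_two_eq_zero_or_one n with h | h <;> simp [h]

lemma card_trichotomy_arith (r s : ℕ) (hr : 0 < r) (hs : 0 < s)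
    (h : r / Nat.gcd r 2 = s / Nat.gcd s 2) :
    (s = r ∧ ¬(s = 2 * r ∧ Odd r) ∧ ¬(s = r / 2 ∧ Odd (r / 2))) ∨
    (s ≠ r ∧ (s = 2 * r ∧ Odd r) ∧ ¬(s = r / 2 ∧ Odd (r / 2))) ∨
    (s ≠ r ∧ ¬(s = 2 * r ∧ Odd r) ∧ (s = r / 2 ∧ Odd (r / 2))) := by
  rw [gcd_two_eq r, gcd_two_eq s] at h
  simp only [Nat.odd_iff]
  split_ifs at h <;> omega

theorem card_image_trichotomy {G : Type*} [Group G] [Fintype G]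
    (g : G) (hg : ∀ x : G, x ∈ Subgroup.zpowers g) (rho rho' : G →* ℂˣ)
    (h : Nat.card (Subgroup.map rho (Subgroup.zpowers (g ^ 2))) =
         Nat.card (Subgroup.map rho' (Subgroup.zpowers (g ^ 2)))) :
    (Nat.card rho'.range = Nat.card rho.range ∧
      ¬(Nat.card rho'.range = 2 * Nat.card rho.range ∧ Odd (Nat.card rho.range)) ∧
      ¬(Nat.card rho'.range = Nat.card rho.range / 2 ∧ Odd (Nat.card rho.range / 2))) ∨
    (Nat.card rho'.range ≠ Nat.card rho.range ∧
      (Nat.card rho'.range = 2 * Nat.card rho.range ∧ Odd (Nat.card rho.range)) ∧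
      ¬(Nat.card rho'.range = Nat.card rho.range / 2 ∧ Odd (Nat.card rho.range / 2))) ∨
    (Nat.card rho'.range ≠ Nat.card rho.range ∧
      ¬(Nat.card rho'.range = 2 * Nat.card rho.range ∧ Odd (Nat.card rho.range)) ∧
      (Nat.card rho'.range = Nat.card rho.range / 2 ∧ Odd (Nat.card rho.range / 2))) := by
  have htop : Subgroup.zpowers g = ⊤ := (Subgroup.eq_top_iff' _).mpr hg
  have hfin : ∀ f : G →* ℂˣ, IsOfFinOrder (f g) :=
    fun f => f.isOfFinOrder (isOfFinOrder_of_finite g)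
  have hrange : ∀ f : G →* ℂˣ, Nat.card f.range = orderOf (f g) := by
    intro f
    rw [f.range_eq_map, ← htop, MonoidHom.map_zpowers, Nat.card_zpowers]
  have hcard : ∀ f : G →* ℂˣ,
      Nat.card (Subgroup.map f (Subgroup.zpowers (g ^ 2))) =
        orderOf (f g) / Nat.gcd (orderOf (f g)) 2 := by
    intro f
    rw [MonoidHom.map_zpowers, Nat.card_zpowers, map_pow, (hfin f).orderOf_pow]
  rw [hcard rho, hcard rho'] at h
  rw [hrange rho, hrange rho']
  exact card_trichotomy_arith _ _ (hfin rho).orderOf_pos (hfin rho').orderOf_pos h
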